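/- For every t ≥ 2 and γ > 0 there exists ε > 0 such that: if G = (V, E) is a graph and V₁,…,V_t ⊆ V are (not necessarily disjoint) sets such that for each 1 ≤ i ≠ j ≤ t the pair (Vᵢ, Vⱼ) is ε-regular with density d_{ij}, then the number of tuples (v₁,…,v_t) ∈ V₁ × ⋯ × V_t with v_i v_j ∈ E for all 1 ≤ i < j ≤ t is at least (∏_{1≤i<j≤t} d_{ij} − γ)·∏_{i=1}^t |Vᵢ|. -/

import Mathlib

open scoped Classical

noncomputable section

variable {α : Type*}

/-- Density of the pair `(X, Y)` in the graph `G`. -/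
def gdens (G : SimpleGraph α) (X Y : Finset α) : ℝ :=
  (((X ×ˢ Y).filter fun p => G.Adj p.1 p.2).card : ℝ) / ((X.card : ℝ) * (Y.card : ℝ))

/-- The pair `(X, Y)` is `ε`-regular with respect to `G`. -/
def EpsRegular (G : SimpleGraph α) (X Y : Finset α) (ε : ℝ) : Prop :=
  ∀ X' ⊆ X, ∀ Y' ⊆ Y, ε * (X.card : ℝ) ≤ (X'.card : ℝ) → ε * (Y.card : ℝ) ≤ (Y'.card : ℝ) →
    |gdens G X' Y' - gdens G X Y| ≤ ε

end

noncomputable section Helpers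

open Finset

variable {α : Type*}

lemma gdens_nonneg (G : SimpleGraph α) (X Y : Finset α) : 0 ≤ gdens G X Y := by
  unfold gdens; positivity

lemma gdens_le_one (G : SimpleGraph α) (X Y : Finset α) : gdens G X Y ≤ 1 := by
  unfold gdens
  rcases eq_or_ne ((X.card : ℝ) * (Y.card : ℝ)) 0 with h | h
  · rw [h, div_zero]; exact zero_le_one
  · rw [div_le_one (lt_of_le_of_ne (by positivity) (Ne.symm h))]
    calc (((X ×ˢ Y).filter fun p => G.Adj p.1 p.2).card : ℝ)
        ≤ ((X ×ˢ Y).card : ℝ) := by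
          exact_mod_cast Nat.cast_le.mpr (Finset.card_filter_le _ _)
      _ = (X.card : ℝ) * (Y.card : ℝ) := by rw [Finset.card_product]; push_cast; ring

lemma edges_eq_sum (G : SimpleGraph α) (B D : Finset α) :
    (((B ×ˢ D).filter fun p => G.Adj p.1 p.2).card : ℕ)
      = ∑ x ∈ B, (D.filter fun y => G.Adj x y).card := by
  rw [Finset.card_filter, Finset.sum_product]
  congr 1; ext x; rw [Finset.card_filter]

/-- The bad-vertex lemma: few vertices have small degree into a large subset. -/
lemma bad_card_le (G : SimpleGraph α) {X Y W B : Finset α} {ε : ℝ} (hε : 0 < ε)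
    (hreg : EpsRegular G X Y ε) (hWY : W ⊆ Y) (hW : ε * (Y.card : ℝ) ≤ (W.card : ℝ))
    (hBX : B ⊆ X)
    (hbad : ∀ x ∈ B, ((W.filter fun y => G.Adj x y).card : ℝ)
      < max (gdens G X Y - ε) 0 * (W.card : ℝ)) :
    (B.card : ℝ) ≤ ε * (X.card : ℝ) := by
  rcases B.eq_empty_or_nonempty with hB | hB
  · simp [hB]; positivity
  · set m := max (gdens G X Y - ε) 0 with hm
    obtain ⟨x₀, hx₀⟩ := hB
    have hmpos : 0 < m * (W.card : ℝ) :=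
      lt_of_le_of_lt (by positivity) (hbad x₀ hx₀)
    have hWpos : (0:ℝ) < (W.card : ℝ) := by
      by_contra h
      push_neg at h
      have : (W.card : ℝ) = 0 := le_antisymm h (by positivity)
      rw [this, mul_zero] at hmpos; exact lt_irrefl _ hmpos
    have hmpos' : 0 < m := by nlinarith
    have hmeq : m = gdens G X Y - ε := by
      rcases max_cases (gdens G X Y - ε) (0:ℝ) with ⟨h1, _⟩ | ⟨h1, _⟩
      · exact h1
      · rw [hm, h1] at hmpos'; exact absurd hmpos' (lt_irrefl 0)
    by_contra hcon
    push_neg at hcon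
    have hBX' : ε * (X.card : ℝ) ≤ (B.card : ℝ) := le_of_lt hcon
    have hregBW := hreg B hBX W hWY hBX' hW
    have hBpos : (0:ℝ) < (B.card : ℝ) := by
      exact_mod_cast Nat.cast_pos.mpr (Finset.card_pos.mpr ⟨x₀, hx₀⟩)
    have hsum : (((B ×ˢ W).filter fun p => G.Adj p.1 p.2).card : ℝ)
        < (B.card : ℝ) * (m * (W.card : ℝ)) := by
      rw [edges_eq_sum]
      push_cast
      calc (∑ x ∈ B, ((W.filter fun y => G.Adj x y).card : ℝ))
          < ∑ _x ∈ B, m * (W.card : ℝ) :=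
            Finset.sum_lt_sum_of_nonempty ⟨x₀, hx₀⟩ (fun x hx => hbad x hx)
        _ = (B.card : ℝ) * (m * (W.card : ℝ)) := by
            rw [Finset.sum_const, nsmul_eq_mul]
    have hdlt : gdens G B W < m := by
      unfold gdens
      rw [div_lt_iff₀ (by positivity)]
      calc (((B ×ˢ W).filter fun p => G.Adj p.1 p.2).card : ℝ)
          < (B.card : ℝ) * (m * (W.card : ℝ)) := hsum
        _ = m * ((B.card : ℝ) * (W.card : ℝ)) := by ring
    have : gdens G X Y - ε ≤ gdens G B W := by
      have := abs_le.mp hregBW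
      linarith [this.1]
    rw [hmeq] at hdlt
    linarith

def cliqueCount (G : SimpleGraph α) {t : ℕ} (W : Fin t → Finset α) : ℕ :=
  ((Fintype.piFinset W).filter fun v : Fin t → α =>
    ∀ i j : Fin t, i < j → G.Adj (v i) (v j)).card

lemma cliqueCount_zero (G : SimpleGraph α) (W : Fin 0 → Finset α) :
    cliqueCount G W = 1 := by
  unfold cliqueCount
  rw [Finset.filter_true_of_mem (fun v _ => fun i => i.elim0)]
  simp

lemma cliqueCount_succ (G : SimpleGraph α) {t : ℕ} (W : Fin (t+1) → Finset α) :
    cliqueCount G W = ∑ x ∈ W 0,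
      cliqueCount G (fun i : Fin t => (W i.succ).filter fun y => G.Adj x y) := by
  unfold cliqueCount
  set S := (Fintype.piFinset W).filter fun v : Fin (t+1) → α =>
    ∀ i j : Fin (t+1), i < j → G.Adj (v i) (v j) with hS
  have hmem : ∀ v ∈ S, v 0 ∈ W 0 := by
    intro v hv
    rw [hS, Finset.mem_filter] at hv
    exact (Fintype.mem_piFinset.mp hv.1) 0
  rw [Finset.card_eq_sum_card_fiberwise hmem]
  apply Finset.sum_congr rfl
  intro x hx
  refine Finset.card_bij' (fun v _ => Fin.tail v) (fun w _ => Fin.cons x w)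
    ?hi ?hj ?linv ?rinv
  case hi =>
    intro v hv
    rw [Finset.mem_filter] at hv
    obtain ⟨hvS, hv0⟩ := hv
    rw [hS, Finset.mem_filter] at hvS
    obtain ⟨hpi, hcl⟩ := hvS
    rw [Finset.mem_filter, Fintype.mem_piFinset]
    constructor
    · intro i
      rw [Finset.mem_filter]
      refine ⟨(Fintype.mem_piFinset.mp hpi) i.succ, ?_⟩
      have := hcl 0 i.succ (Fin.succ_pos i)
      rwa [hv0] at this
    · intro i j hij
      exact hcl i.succ j.succ (Fin.succ_lt_succ_iff.mpr hij)
  case hj =>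
    intro w hw
    rw [Finset.mem_filter, Fintype.mem_piFinset] at hw
    obtain ⟨hpi, hcl⟩ := hw
    rw [Finset.mem_filter, hS, Finset.mem_filter, Fintype.mem_piFinset]
    refine ⟨⟨?_, ?_⟩, by simp⟩
    · intro i
      refine Fin.cases ?_ ?_ i
      · simp only [Fin.cons_zero]; exact hx
      · intro i'
        simp only [Fin.cons_succ]
        exact Finset.mem_of_mem_filter _ (hpi i')
    · intro i j hij
      revert hij
      refine Fin.cases ?_ ?_ i <;> [skip; intro i'] <;>
        refine Fin.cases ?_ ?_ j <;> [skip; intro j'; skip; intro j'] <;>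
          intro hlt
      · exact absurd hlt (lt_irrefl _)
      · simp only [Fin.cons_zero, Fin.cons_succ]
        exact (Finset.mem_filter.mp (hpi j')).2
      · exact absurd hlt (Fin.not_lt_zero _)
      · simp only [Fin.cons_succ]
        exact hcl i' j' (Fin.succ_lt_succ_iff.mp hlt)
  case linv =>
    intro v hv
    rw [Finset.mem_filter] at hv
    show Fin.cons x (Fin.tail v) = v
    rw [show x = v 0 from hv.2.symm, Fin.cons_self_tail]
  case rinv =>
    intro w _
    simp

/-- ∏ f ≥ ∏ g − ∑ (g − f), for 0 ≤ f ≤ g ≤ 1. -/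
lemma prod_ge_prod_sub_sum {ι : Type*} (s : Finset ι) (f g : ι → ℝ) :
    (∀ i ∈ s, 0 ≤ f i) → (∀ i ∈ s, f i ≤ g i) → (∀ i ∈ s, g i ≤ 1) →
    (∏ i ∈ s, g i) - ∑ i ∈ s, (g i - f i) ≤ ∏ i ∈ s, f i := by
  classical
  induction s using Finset.induction_on with
  | empty => simp
  | @insert a s ha ih =>
    intro hf hfg hg
    have hf' : ∀ i ∈ s, 0 ≤ f i := fun i hi => hf i (mem_insert_of_mem hi)
    have hfg' : ∀ i ∈ s, f i ≤ g i := fun i hi => hfg i (mem_insert_of_mem hi)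
    have hg' : ∀ i ∈ s, g i ≤ 1 := fun i hi => hg i (mem_insert_of_mem hi)
    have IH := ih hf' hfg' hg'
    rw [Finset.prod_insert ha, Finset.prod_insert ha, Finset.sum_insert ha]
    have hga : g a ≤ 1 := hg a (mem_insert_self a s)
    have hfa : 0 ≤ f a := hf a (mem_insert_self a s)
    have hfga : f a ≤ g a := hfg a (mem_insert_self a s)
    have hprodg0 : 0 ≤ ∏ i ∈ s, g i :=
      Finset.prod_nonneg fun i hi => le_trans (hf' i hi) (hfg' i hi)
    have hprodg1 : ∏ i ∈ s, g i ≤ 1 :=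
      Finset.prod_le_one (fun i hi => le_trans (hf' i hi) (hfg' i hi)) hg'
    have hsum0 : 0 ≤ ∑ i ∈ s, (g i - f i) :=
      Finset.sum_nonneg fun i hi => sub_nonneg.mpr (hfg' i hi)
    have hfa1 : f a ≤ 1 := le_trans hfga hga
    have step1 : f a * (∏ i ∈ s, g i - ∑ i ∈ s, (g i - f i)) ≤ f a * ∏ i ∈ s, f i :=
      mul_le_mul_of_nonneg_left IH hfa
    nlinarith [mul_le_mul_of_nonneg_right (sub_nonneg.mpr hfga) hprodg0]

lemma prod_filter_lt_succ {t : ℕ} (f : Fin (t+1) → ℝ) (i : Fin t) :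
    ∏ j ∈ Finset.univ.filter (fun j => j < i.succ), f j
      = f 0 * ∏ j ∈ Finset.univ.filter (fun j : Fin t => j < i), f j.succ := by
  rw [Finset.prod_filter, Finset.prod_filter, Fin.prod_univ_succ]
  congr 1
  · simp [Fin.succ_pos]

lemma prod_filter_lt_zero {t : ℕ} (f : Fin (t+1) → ℝ) :
    ∏ j ∈ Finset.univ.filter (fun j => j < (0 : Fin (t+1))), f j = 1 := by
  rw [Finset.filter_eq_empty_iff.mpr (fun x _ => Fin.not_lt_zero x), Finset.prod_empty]

lemma pairs_prod_eq {t : ℕ} (f : Fin t → Fin t → ℝ) :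
    ∏ p ∈ Finset.univ.filter (fun p : Fin t × Fin t => p.1 < p.2), f p.1 p.2
      = ∏ i : Fin t, ∏ j ∈ Finset.univ.filter (fun j => j < i), f j i := by
  rw [Finset.prod_filter]
  rw [← Finset.univ_product_univ, Finset.prod_product_right]
  apply Finset.prod_congr rfl
  intro i _
  rw [Finset.prod_filter]

/-- The main inductive counting claim. -/
lemma main_claim (G : SimpleGraph α) (ε : ℝ) (hε : 0 < ε) :
    ∀ (t : ℕ) (V W : Fin t → Finset α),
      (∀ i j, i ≠ j → EpsRegular G (V i) (V j) ε) →
      (∀ i, W i ⊆ V i) →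
      (∀ i, ε * ((V i).card : ℝ) ≤ ((W i).card : ℝ)) →
      ∏ i, max ((∏ j ∈ Finset.univ.filter (fun j => j < i),
          max (gdens G (V j) (V i) - ε) 0) * ((W i).card : ℝ)
          - (t : ℝ) * ε * ((V i).card : ℝ)) 0
        ≤ (cliqueCount G W : ℝ) := by
  intro t
  induction t with
  | zero =>
    intro V W _ _ _
    rw [cliqueCount_zero]
    simp
  | succ t ih =>
    intro V W hreg hWV hWbig
    set e : Fin (t+1) → Fin (t+1) → ℝ :=
      fun i j => max (gdens G (V i) (V j) - ε) 0 with he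
    have he0 : ∀ i j, 0 ≤ e i j := fun i j => le_max_right _ _
    have he1 : ∀ i j, e i j ≤ 1 := fun i j =>
      max_le (by linarith [gdens_le_one G (V i) (V j)]) zero_le_one
    -- abbreviations for the goal's factors
    set F : Fin (t+1) → ℝ := fun i =>
      max ((∏ j ∈ Finset.univ.filter (fun j => j < i), e j i) * ((W i).card : ℝ)
        - ((t+1 : ℕ) : ℝ) * ε * ((V i).card : ℝ)) 0 with hF
    have hF0 : ∀ i, 0 ≤ F i := fun i => le_max_right _ _
    have hgoal_eq : (∏ i, max ((∏ j ∈ Finset.univ.filter (fun j => j < i),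
          max (gdens G (V j) (V i) - ε) 0) * ((W i).card : ℝ)
          - ((t+1 : ℕ) : ℝ) * ε * ((V i).card : ℝ)) 0) = ∏ i, F i := rfl
    by_cases hcase : ∀ j : Fin t,
        ε * ((V j.succ).card : ℝ) ≤ e 0 j.succ * ((W j.succ).card : ℝ)
    · -- main case: proceed with the greedy embedding
      set Good := (W 0).filter (fun x => ∀ j : Fin t,
        e 0 j.succ * ((W j.succ).card : ℝ)
          ≤ (((W j.succ).filter fun y => G.Adj x y).card : ℝ)) with hGood
      have hGsub : Good ⊆ W 0 := Finset.filter_subset _ _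
      -- bound on the number of bad vertices
      have hbadj : ∀ j : Fin t,
          (((W 0).filter (fun x => ¬ (e 0 j.succ * ((W j.succ).card : ℝ)
            ≤ (((W j.succ).filter fun y => G.Adj x y).card : ℝ)))).card : ℝ)
            ≤ ε * ((V 0).card : ℝ) := by
        intro j
        apply bad_card_le G hε (hreg 0 j.succ (Fin.succ_ne_zero j).symm)
          (hWV j.succ) (hWbig j.succ) ((Finset.filter_subset _ _).trans (hWV 0))
        intro x hx
        rw [Finset.mem_filter] at hx
        exact not_le.mp hx.2
      have hGoodcard : ((W 0).card : ℝ) - (t : ℝ) * ε * ((V 0).card : ℝ)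
          ≤ (Good.card : ℝ) := by
        have hsub : (W 0) \ Good ⊆ Finset.univ.biUnion (fun j : Fin t =>
            (W 0).filter (fun x => ¬ (e 0 j.succ * ((W j.succ).card : ℝ)
              ≤ (((W j.succ).filter fun y => G.Adj x y).card : ℝ)))) := by
          intro x hx
          rw [Finset.mem_sdiff, hGood, Finset.mem_filter] at hx
          obtain ⟨hxW, hxn⟩ := hx
          push_neg at hxn
          obtain ⟨j, hj⟩ := hxn hxW
          rw [Finset.mem_biUnion]
          exact ⟨j, Finset.mem_univ j, Finset.mem_filter.mpr ⟨hxW, not_le.mpr hj⟩⟩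
        have h1 : (((W 0) \ Good).card : ℝ) ≤ (t : ℝ) * ε * ((V 0).card : ℝ) := by
          calc (((W 0) \ Good).card : ℝ)
              ≤ ((Finset.univ.biUnion (fun j : Fin t =>
                  (W 0).filter (fun x => ¬ (e 0 j.succ * ((W j.succ).card : ℝ)
                    ≤ (((W j.succ).filter fun y => G.Adj x y).card : ℝ))))).card : ℝ) := by
                exact_mod_cast Nat.cast_le.mpr (Finset.card_le_card hsub)
            _ ≤ ∑ j : Fin t, (((W 0).filter (fun x => ¬ (e 0 j.succ * ((W j.succ).card : ℝ)
                    ≤ (((W j.succ).filter fun y => G.Adj x y).card : ℝ)))).card : ℝ) := by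
                exact_mod_cast Nat.cast_le.mpr (Finset.card_biUnion_le)
            _ ≤ ∑ _j : Fin t, ε * ((V 0).card : ℝ) :=
                Finset.sum_le_sum (fun j _ => hbadj j)
            _ = (t : ℝ) * ε * ((V 0).card : ℝ) := by
                rw [Finset.sum_const]; simp [nsmul_eq_mul]; ring
        have h2 : ((W 0 \ Good).card : ℝ) = ((W 0).card : ℝ) - (Good.card : ℝ) := by
          rw [Finset.card_sdiff_of_subset hGsub]
          exact_mod_cast Nat.cast_sub (Finset.card_le_card hGsub)
        linarith
      -- for good x, apply the induction hypothesis
      have hIH : ∀ x ∈ Good,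
          (∏ i : Fin t, F i.succ) ≤ (cliqueCount G
            (fun i : Fin t => (W i.succ).filter fun y => G.Adj x y) : ℝ) := by
        intro x hxG
        rw [hGood, Finset.mem_filter] at hxG
        obtain ⟨hxW, hxg⟩ := hxG
        have hIH0 := ih (fun i => V i.succ)
          (fun i => (W i.succ).filter fun y => G.Adj x y)
          (fun i j hij => hreg i.succ j.succ (fun h => hij (Fin.succ_injective t h)))
          (fun i => (Finset.filter_subset _ _).trans (hWV i.succ))
          (fun i => le_trans (hcase i) (hxg i))
        refine le_trans ?_ hIH0
        apply Finset.prod_le_prod (fun i _ => hF0 i.succ)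
        intro i _
        rw [hF]
        apply max_le
        · refine le_trans ?_ (le_max_left _ _)
          have hsplit := prod_filter_lt_succ (fun j => e j i.succ) i
          have hc' : 0 ≤ ∏ j ∈ Finset.univ.filter (fun j : Fin t => j < i), e j.succ i.succ :=
            Finset.prod_nonneg (fun j _ => he0 _ _)
          have hcc : (∏ j ∈ Finset.univ.filter (fun j => j < i.succ), e j i.succ)
                * ((W i.succ).card : ℝ)
              ≤ (∏ j ∈ Finset.univ.filter (fun j : Fin t => j < i), e j.succ i.succ)
                * ((((W i.succ).filter fun y => G.Adj x y).card : ℝ)) := by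
            rw [hsplit]
            calc e 0 i.succ * (∏ j ∈ Finset.univ.filter (fun j : Fin t => j < i),
                  e j.succ i.succ) * ((W i.succ).card : ℝ)
                = (∏ j ∈ Finset.univ.filter (fun j : Fin t => j < i), e j.succ i.succ)
                  * (e 0 i.succ * ((W i.succ).card : ℝ)) := by ring
              _ ≤ _ := mul_le_mul_of_nonneg_left (hxg i) hc'
          have hVpos : (0:ℝ) ≤ ε * ((V i.succ).card : ℝ) := by positivity
          push_cast
          push_cast at hcc
          nlinarith
        · exact le_max_right _ _
      -- F 0 ≤ Good.card
      have hF0le : F 0 ≤ (Good.card : ℝ) := by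
        rw [hF]
        apply max_le
        · rw [prod_filter_lt_zero (fun j => e j 0), one_mul]
          have : (0:ℝ) ≤ ε * ((V 0).card : ℝ) := by positivity
          push_cast
          linarith
        · positivity
      -- assemble
      rw [hgoal_eq, Fin.prod_univ_succ]
      have hP0 : 0 ≤ ∏ i : Fin t, F i.succ :=
        Finset.prod_nonneg (fun i _ => hF0 i.succ)
      calc F 0 * ∏ i : Fin t, F i.succ
          ≤ (Good.card : ℝ) * ∏ i : Fin t, F i.succ :=
            mul_le_mul_of_nonneg_right hF0le hP0
        _ = ∑ _x ∈ Good, ∏ i : Fin t, F i.succ := by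
            rw [Finset.sum_const, nsmul_eq_mul]
        _ ≤ ∑ x ∈ Good, (cliqueCount G
              (fun i : Fin t => (W i.succ).filter fun y => G.Adj x y) : ℝ) :=
            Finset.sum_le_sum hIH
        _ ≤ ∑ x ∈ W 0, (cliqueCount G
              (fun i : Fin t => (W i.succ).filter fun y => G.Adj x y) : ℝ) :=
            Finset.sum_le_sum_of_subset_of_nonneg hGsub (fun x _ _ => by positivity)
        _ = (cliqueCount G W : ℝ) := by
            rw [cliqueCount_succ]
            push_cast
            rfl
    · -- degenerate case: some factor of the goal is zero
      push_neg at hcase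
      obtain ⟨j, hj⟩ := hcase
      rw [hgoal_eq]
      have hFj : F j.succ = 0 := by
        rw [hF]
        apply max_eq_right
        have hsplit := prod_filter_lt_succ (fun i => e i j.succ) j
        have hc'1 : ∏ i ∈ Finset.univ.filter (fun i : Fin t => i < j), e i.succ j.succ ≤ 1 :=
          Finset.prod_le_one (fun i _ => he0 _ _) (fun i _ => he1 _ _)
        have hc'0 : 0 ≤ ∏ i ∈ Finset.univ.filter (fun i : Fin t => i < j), e i.succ j.succ :=
          Finset.prod_nonneg (fun i _ => he0 _ _)
        have hcle : (∏ i ∈ Finset.univ.filter (fun i => i < j.succ), e i j.succ)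
            ≤ e 0 j.succ := by
          rw [hsplit]
          nlinarith [he0 0 j.succ]
        have hW0 : (0:ℝ) ≤ ((W j.succ).card : ℝ) := by positivity
        have h1 : (∏ i ∈ Finset.univ.filter (fun i => i < j.succ), e i j.succ)
            * ((W j.succ).card : ℝ) ≤ e 0 j.succ * ((W j.succ).card : ℝ) :=
          mul_le_mul_of_nonneg_right hcle hW0
        have h2 : (0:ℝ) ≤ (t : ℝ) * ε * ((V j.succ).card : ℝ) := by positivity
        push_cast
        nlinarith
      rw [Finset.prod_eq_zero (Finset.mem_univ j.succ) hFj]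
      positivity

end Helpers

set_option maxHeartbeats 1000000 in
/-- graph counting lemma: for every `t ≥ 2` and `γ > 0` there is
`ε > 0` such that for pairwise `ε`-regular tuples `V₁, …, V_t`, the number of
labeled cliques transversal to the tuple is at least
`(∏_{i<j} d_{ij} − γ)·∏ᵢ |Vᵢ|`. -/
theorem stmt_15 :
    ∀ (t : ℕ) (γ : ℝ), 2 ≤ t → 0 < γ →
      ∃ ε : ℝ, 0 < ε ∧
        ∀ (α : Type) (G : SimpleGraph α) (V : Fin t → Finset α),
          (∀ i j, i ≠ j → EpsRegular G (V i) (V j) ε) →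
          ((∏ p ∈ Finset.univ.filter (fun p : Fin t × Fin t => p.1 < p.2),
              gdens G (V p.1) (V p.2)) - γ) * ∏ i, ((V i).card : ℝ) ≤
            (((Fintype.piFinset V).filter fun v : Fin t → α =>
              ∀ i j : Fin t, i < j → G.Adj (v i) (v j)).card : ℝ) := by
  intro t γ ht hγ
  set ε : ℝ := γ ^ t / (8 * (t : ℝ) ^ 2) with hεdef
  have ht0 : (0:ℝ) < (t : ℝ) := by positivity
  have ht2 : (2:ℝ) ≤ (t : ℝ) := by exact_mod_cast ht
  have hεpos : 0 < ε := by positivity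
  refine ⟨ε, hεpos, ?_⟩
  intro α G V hreg
  set D := ∏ p ∈ Finset.univ.filter (fun p : Fin t × Fin t => p.1 < p.2),
    gdens G (V p.1) (V p.2) with hD
  have hVprod0 : (0:ℝ) ≤ ∏ i, ((V i).card : ℝ) :=
    Finset.prod_nonneg (fun i _ => by positivity)
  by_cases hDγ : D ≤ γ
  · -- trivial case
    have h1 : (D - γ) * ∏ i, ((V i).card : ℝ) ≤ 0 :=
      mul_nonpos_of_nonpos_of_nonneg (by linarith) hVprod0
    exact le_trans h1 (by positivity)
  · push_neg at hDγ
    have hdens1 : ∀ i j : Fin t, gdens G (V i) (V j) ≤ 1 := fun i j => gdens_le_one G _ _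
    have hdens0 : ∀ i j : Fin t, 0 ≤ gdens G (V i) (V j) := fun i j => gdens_nonneg G _ _
    have hD1 : D ≤ 1 := Finset.prod_le_one (fun p _ => hdens0 _ _) (fun p _ => hdens1 _ _)
    have hγ1 : γ < 1 := lt_of_lt_of_le hDγ hD1
    -- each density appearing in D is at least γ
    have hdγ : ∀ i j : Fin t, j < i → γ ≤ gdens G (V j) (V i) := by
      intro i j hji
      have hmem : ((j, i) : Fin t × Fin t) ∈
          Finset.univ.filter (fun p : Fin t × Fin t => p.1 < p.2) :=
        Finset.mem_filter.mpr ⟨Finset.mem_univ _, hji⟩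
      have hsplit := (Finset.mul_prod_erase _
        (fun p : Fin t × Fin t => gdens G (V p.1) (V p.2)) hmem).symm
      have herase1 : (∏ p ∈ (Finset.univ.filter
          (fun p : Fin t × Fin t => p.1 < p.2)).erase (j, i),
            gdens G (V p.1) (V p.2)) ≤ 1 :=
        Finset.prod_le_one (fun p _ => hdens0 _ _) (fun p _ => hdens1 _ _)
      have herase0 : 0 ≤ (∏ p ∈ (Finset.univ.filter
          (fun p : Fin t × Fin t => p.1 < p.2)).erase (j, i),
            gdens G (V p.1) (V p.2)) :=
        Finset.prod_nonneg (fun p _ => hdens0 _ _)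
      have h3 : D ≤ gdens G (V j) (V i) := by
        rw [hD, hsplit]
        nlinarith [hdens0 j i]
      linarith
    -- numeric facts about ε
    have hγt0 : (0:ℝ) < γ ^ t := by positivity
    have hγtγ : γ ^ t ≤ γ := by
      calc γ ^ t ≤ γ ^ 1 := pow_le_pow_of_le_one hγ.le hγ1.le (by omega)
        _ = γ := pow_one γ
    have ht2sq : (4:ℝ) ≤ (t : ℝ) ^ 2 := by nlinarith
    have htne : (t:ℝ) ≠ 0 := ne_of_gt ht0
    have hεb : 2 * (t : ℝ) ^ 2 * ε ≤ γ := by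
      have h1 : 2 * (t:ℝ)^2 * ε = γ ^ t / 4 := by
        rw [hεdef]; field_simp; ring
      rw [h1]; linarith
    have hεγ : ε < γ := by nlinarith
    have hε1 : ε ≤ 1 := by linarith
    have h2tε : 2 * (t:ℝ) * ε ≤ γ ^ t := by
      have h1 : 2 * (t:ℝ) * ε = γ ^ t / (4 * t) := by
        rw [hεdef]; field_simp; ring
      rw [h1]
      exact div_le_self hγt0.le (by linarith)
    -- apply the main claim with W = V
    have hmain := main_claim G ε hεpos t V V hreg (fun i => subset_rfl)
      (fun i => by nlinarith [Nat.cast_nonneg ((V i).card) (α := ℝ)])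
    refine le_trans ?_ hmain
    -- compare the products
    have hk : ∀ i : Fin t,
        ((Finset.univ.filter (fun j : Fin t => j < i)).card : ℝ) ≤ (t:ℝ) := by
      intro i
      have h1 : (Finset.univ.filter (fun j : Fin t => j < i)).card ≤ t := by
        calc (Finset.univ.filter (fun j : Fin t => j < i)).card
            ≤ (Finset.univ : Finset (Fin t)).card := Finset.card_filter_le _ _
          _ = t := by rw [Finset.card_univ, Fintype.card_fin]
      exact_mod_cast h1
    have ha0 : ∀ i : Fin t,
        0 ≤ ∏ j ∈ Finset.univ.filter (fun j : Fin t => j < i), gdens G (V j) (V i) :=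
      fun i => Finset.prod_nonneg (fun j _ => hdens0 _ _)
    have ha1 : ∀ i : Fin t,
        (∏ j ∈ Finset.univ.filter (fun j : Fin t => j < i), gdens G (V j) (V i)) ≤ 1 :=
      fun i => Finset.prod_le_one (fun j _ => hdens0 _ _) (fun j _ => hdens1 _ _)
    have haγt : ∀ i : Fin t,
        γ ^ t ≤ ∏ j ∈ Finset.univ.filter (fun j : Fin t => j < i), gdens G (V j) (V i) := by
      intro i
      have h1 : γ ^ ((Finset.univ.filter (fun j : Fin t => j < i)).card)
          ≤ ∏ j ∈ Finset.univ.filter (fun j : Fin t => j < i), gdens G (V j) (V i) := by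
        rw [← Finset.prod_const]
        exact Finset.prod_le_prod (fun j _ => hγ.le)
          (fun j hj => hdγ i j (Finset.mem_filter.mp hj).2)
      have h2 : γ ^ t ≤ γ ^ ((Finset.univ.filter (fun j : Fin t => j < i)).card) := by
        apply pow_le_pow_of_le_one hγ.le hγ1.le
        exact_mod_cast hk i
      linarith
    -- per-factor comparison
    have hfac : ∀ i : Fin t,
        ((∏ j ∈ Finset.univ.filter (fun j : Fin t => j < i), gdens G (V j) (V i))
            - 2 * (t:ℝ) * ε) * ((V i).card : ℝ)
        ≤ max ((∏ j ∈ Finset.univ.filter (fun j => j < i),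
            max (gdens G (V j) (V i) - ε) 0) * ((V i).card : ℝ)
            - (t : ℝ) * ε * ((V i).card : ℝ)) 0 := by
      intro i
      refine le_trans ?_ (le_max_left _ _)
      have hmax : ∀ j ∈ Finset.univ.filter (fun j : Fin t => j < i),
          max (gdens G (V j) (V i) - ε) 0 = gdens G (V j) (V i) - ε := by
        intro j hj
        exact max_eq_left (by linarith [hdγ i j (Finset.mem_filter.mp hj).2])
      rw [Finset.prod_congr rfl hmax]
      have hprodge : (∏ j ∈ Finset.univ.filter (fun j : Fin t => j < i),
            gdens G (V j) (V i)) - (t:ℝ) * ε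
          ≤ ∏ j ∈ Finset.univ.filter (fun j : Fin t => j < i),
            (gdens G (V j) (V i) - ε) := by
        have h0 := prod_ge_prod_sub_sum (Finset.univ.filter (fun j : Fin t => j < i))
          (fun j => gdens G (V j) (V i) - ε) (fun j => gdens G (V j) (V i))
          (fun j hj => by
            show 0 ≤ gdens G (V j) (V i) - ε
            linarith [hdγ i j (Finset.mem_filter.mp hj).2])
          (fun j _ => by
            show gdens G (V j) (V i) - ε ≤ gdens G (V j) (V i)
            linarith)
          (fun j _ => hdens1 _ _)
        simp only [sub_sub_cancel, Finset.sum_const, nsmul_eq_mul] at h0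
        have hsum : ((Finset.univ.filter (fun j : Fin t => j < i)).card : ℝ) * ε
            ≤ (t:ℝ) * ε := mul_le_mul_of_nonneg_right (hk i) hεpos.le
        linarith
      have hV0 : (0:ℝ) ≤ ((V i).card : ℝ) := by positivity
      have := mul_le_mul_of_nonneg_right hprodge hV0
      nlinarith
    -- assemble
    have hDlow : D - γ ≤ ∏ i : Fin t,
        ((∏ j ∈ Finset.univ.filter (fun j : Fin t => j < i), gdens G (V j) (V i))
          - 2 * (t:ℝ) * ε) := by
      have h0 := prod_ge_prod_sub_sum (Finset.univ : Finset (Fin t))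
        (fun i => (∏ j ∈ Finset.univ.filter (fun j : Fin t => j < i),
            gdens G (V j) (V i)) - 2 * (t:ℝ) * ε)
        (fun i => ∏ j ∈ Finset.univ.filter (fun j : Fin t => j < i), gdens G (V j) (V i))
        (fun i _ => by
          show 0 ≤ (∏ j ∈ Finset.univ.filter (fun j : Fin t => j < i),
            gdens G (V j) (V i)) - 2 * (t:ℝ) * ε
          linarith [haγt i, h2tε])
        (fun i _ => by
          show (∏ j ∈ Finset.univ.filter (fun j : Fin t => j < i),
              gdens G (V j) (V i)) - 2 * (t:ℝ) * ε
            ≤ ∏ j ∈ Finset.univ.filter (fun j : Fin t => j < i), gdens G (V j) (V i)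
          nlinarith)
        (fun i _ => ha1 i)
      simp only [sub_sub_cancel, Finset.sum_const, nsmul_eq_mul, Finset.card_univ,
        Fintype.card_fin] at h0
      have hDeq : (∏ i : Fin t, ∏ j ∈ Finset.univ.filter (fun j : Fin t => j < i),
          gdens G (V j) (V i)) = D := by
        rw [hD]
        exact (pairs_prod_eq (fun j i => gdens G (V j) (V i))).symm
      rw [hDeq] at h0
      nlinarith
    calc (D - γ) * ∏ i, ((V i).card : ℝ)
        ≤ (∏ i : Fin t, ((∏ j ∈ Finset.univ.filter (fun j : Fin t => j < i),
              gdens G (V j) (V i)) - 2 * (t:ℝ) * ε)) * ∏ i, ((V i).card : ℝ) :=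
          mul_le_mul_of_nonneg_right hDlow hVprod0
      _ = ∏ i : Fin t, (((∏ j ∈ Finset.univ.filter (fun j : Fin t => j < i),
              gdens G (V j) (V i)) - 2 * (t:ℝ) * ε) * ((V i).card : ℝ)) := by
          rw [Finset.prod_mul_distrib]
      _ ≤ ∏ i, max ((∏ j ∈ Finset.univ.filter (fun j => j < i),
            max (gdens G (V j) (V i) - ε) 0) * ((V i).card : ℝ)
            - (t : ℝ) * ε * ((V i).card : ℝ)) 0 := by
          apply Finset.prod_le_prod
          · intro i _
            have h1 := haγt i
            have hV0 : (0:ℝ) ≤ ((V i).card : ℝ) := by positivity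
            show 0 ≤ ((∏ j ∈ Finset.univ.filter (fun j : Fin t => j < i),
                gdens G (V j) (V i)) - 2 * (t:ℝ) * ε) * ((V i).card : ℝ)
            nlinarith [h2tε]
          · intro i _
            exact hfac i
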